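/- Let M be a compact metric space, P a Feller Markov kernel on M, and C(M) a convex cone of finite nonnegative measures stable by monotone convergence with C(M)P ⊂ C(M). Suppose there is an open set V ⊂ M, a nontrivial measure π ∈ C(M), and 0 < a < 1 with resolvent R_a = (1−a)Σ_{k≥0} a^k P^k, such that R_a(x,·) ≥ π(·) for all x ∈ V, R_a(x,V) > 0 for all x ∈ M, and for all μ ∈ C(M) with μ ≥ π one has μ − π ∈ C(M). Then P has a unique invariant probability measure Π, and Π ∈ C(M). -/

import Mathlib

open MeasureTheory ProbabilityTheory Filter
open scoped ENNReal Topology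

/-- The `a`-kernelResolvent `R_a(x,·) = (1-a) ∑_{k≥0} a^k P^k(x,·)` of a Markov kernel,
where `P^k` denotes the `k`-fold iterate of the action of `P` on measures. -/
noncomputable def kernelResolvent {M : Type*} [MeasurableSpace M]
    (P : ProbabilityTheory.Kernel M M) (a : ℝ≥0∞) (x : M) : Measure M :=
  (1 - a) • Measure.sum (fun k : ℕ =>
    a ^ k • (fun μ : Measure M => μ.bind (⇑P))^[k] (Measure.dirac x))

section Aux

variable {M : Type*} [MeasurableSpace M]

/-- Iterates of a kernel. -/
noncomputable def kIter (P : Kernel M M) : ℕ → Kernel M M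
  | 0 => Kernel.id
  | n + 1 => kIter P n ∘ₖ P

lemma kIter_zero (P : Kernel M M) : kIter P 0 = Kernel.id := rfl

lemma kIter_succ (P : Kernel M M) (n : ℕ) : kIter P (n + 1) = kIter P n ∘ₖ P := rfl

instance kIter_markov (P : Kernel M M) [IsMarkovKernel P] (n : ℕ) :
    IsMarkovKernel (kIter P n) := by
  induction n with
  | zero => rw [kIter_zero]; infer_instance
  | succ n ih => rw [kIter_succ]; exact Kernel.IsMarkovKernel.comp _ _

lemma kIter_succ' (P : Kernel M M) [IsMarkovKernel P] (n : ℕ) : kIter P (n + 1) = P ∘ₖ kIter P n := by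
  induction n with
  | zero => rw [kIter_succ, kIter_zero, Kernel.id_comp, Kernel.comp_id]
  | succ n ih => rw [kIter_succ (n := n + 1), ih, Kernel.comp_assoc, ← kIter_succ, ih]

lemma coe_kernel_id : ⇑(Kernel.id : Kernel M M) = Measure.dirac := by
  funext x; exact Kernel.id_apply x

lemma bind_kIter_succ (m : Measure M) (P : Kernel M M) [IsMarkovKernel P] (k : ℕ) :
    m.bind ⇑(kIter P (k + 1)) = (m.bind ⇑(kIter P k)).bind ⇑P := by
  rw [Measure.bind_bind (Kernel.measurable _).aemeasurable (Kernel.measurable _).aemeasurable]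
  congr 1
  funext x
  rw [kIter_succ' P k, Kernel.comp_apply]

lemma bind_iterate (P : Kernel M M) [IsMarkovKernel P] (k : ℕ) (μ : Measure M) :
    (fun μ : Measure M => μ.bind (⇑P))^[k] μ = μ.bind ⇑(kIter P k) := by
  induction k with
  | zero => simp [kIter_zero, coe_kernel_id, Measure.bind_dirac]
  | succ k ih =>
    rw [Function.iterate_succ_apply', ih, ← bind_kIter_succ]

lemma kernelResolvent_eq (P : Kernel M M) [IsMarkovKernel P] (a : ℝ≥0∞) (x : M) :
    kernelResolvent P a x = (1 - a) • Measure.sum (fun k : ℕ => a ^ k • kIter P k x) := by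
  unfold kernelResolvent
  congr 1
  congr 1
  funext k
  rw [bind_iterate, Measure.dirac_bind (Kernel.measurable _)]

lemma kernelResolvent_apply (P : Kernel M M) [IsMarkovKernel P] (a : ℝ≥0∞) (x : M) {A : Set M}
    (hA : MeasurableSet A) :
    kernelResolvent P a x A = (1 - a) * ∑' k : ℕ, a ^ k * kIter P k x A := by
  rw [kernelResolvent_eq, Measure.smul_apply, Measure.sum_apply _ hA]
  simp [smul_eq_mul]

/-- The resolvent as a kernel. -/
noncomputable def resKer (P : Kernel M M) [IsMarkovKernel P] (a : ℝ≥0∞) : Kernel M M :=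
  Kernel.mk (kernelResolvent P a)
    (Measure.measurable_of_measurable_coe _ (fun s hs => by
      simp only [kernelResolvent_apply P a _ hs]
      exact measurable_const.mul
        (Measurable.ennreal_tsum fun k => measurable_const.mul (Kernel.measurable_coe _ hs))))

lemma resKer_apply (P : Kernel M M) [IsMarkovKernel P] (a : ℝ≥0∞) (x : M) :
    resKer P a x = kernelResolvent P a x := rfl

lemma one_sub_ne_zero {a : ℝ≥0∞} (ha1 : a < 1) : 1 - a ≠ 0 :=
  (tsub_pos_iff_lt.mpr ha1).ne'

lemma one_sub_ne_top {a : ℝ≥0∞} : (1 : ℝ≥0∞) - a ≠ ⊤ :=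
  ne_top_of_le_ne_top ENNReal.one_ne_top tsub_le_self

lemma resKer_markov (P : Kernel M M) [IsMarkovKernel P] {a : ℝ≥0∞} (ha1 : a < 1) :
    IsMarkovKernel (resKer P a) := by
  refine ⟨fun x => ⟨?_⟩⟩
  rw [resKer_apply, kernelResolvent_apply P a x MeasurableSet.univ]
  simp only [measure_univ, mul_one]
  rw [ENNReal.tsum_geometric, ENNReal.mul_inv_cancel (one_sub_ne_zero ha1) one_sub_ne_top]

lemma bind_resKer_apply (P : Kernel M M) [IsMarkovKernel P] (a : ℝ≥0∞) (m : Measure M) {A : Set M}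
    (hA : MeasurableSet A) :
    (m.bind ⇑(resKer P a)) A = (1 - a) * ∑' k : ℕ, a ^ k * (m.bind ⇑(kIter P k)) A := by
  rw [Measure.bind_apply hA (Kernel.measurable _).aemeasurable]
  have h1 : ∀ x : M, resKer P a x A = (1 - a) * ∑' k : ℕ, a ^ k * kIter P k x A :=
    fun x => kernelResolvent_apply P a x hA
  simp only [h1]
  rw [lintegral_const_mul _ (f := fun x => ∑' k : ℕ, a ^ k * kIter P k x A) (Measurable.ennreal_tsum fun k =>
    measurable_const.mul (Kernel.measurable_coe _ hA))]
  congr 1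
  rw [lintegral_tsum (f := fun k x => a ^ k * kIter P k x A) fun k =>
    (measurable_const.mul (Kernel.measurable_coe _ hA)).aemeasurable]
  refine tsum_congr fun k => ?_
  rw [lintegral_const_mul _ (Kernel.measurable_coe _ hA), Measure.bind_apply hA (Kernel.measurable _).aemeasurable]

lemma bind_kIter_invariant (P : Kernel M M) [IsMarkovKernel P] {m : Measure M} (hm : m.bind ⇑P = m) (k : ℕ) :
    m.bind ⇑(kIter P k) = m := by
  induction k with
  | zero => simp [kIter_zero, coe_kernel_id, Measure.bind_dirac]
  | succ k ih => rw [bind_kIter_succ, ih, hm]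

lemma bind_resKer_invariant (P : Kernel M M) [IsMarkovKernel P] {a : ℝ≥0∞} (ha1 : a < 1) {m : Measure M}
    (hm : m.bind ⇑P = m) : m.bind ⇑(resKer P a) = m := by
  ext A hA
  rw [bind_resKer_apply P a m hA]
  simp only [bind_kIter_invariant P hm]
  rw [ENNReal.tsum_mul_right, ENNReal.tsum_geometric, ← mul_assoc,
    ENNReal.mul_inv_cancel (one_sub_ne_zero ha1) one_sub_ne_top, one_mul]

/-- The resolvent commutes with the kernel, at the level of kernels. -/
lemma resKer_comp_comm (P : Kernel M M) [IsMarkovKernel P] (a : ℝ≥0∞) :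
    resKer P a ∘ₖ P = P ∘ₖ resKer P a := by
  ext x A hA
  rw [Kernel.comp_apply, Kernel.comp_apply]
  have h1 : ((P x).bind ⇑(resKer P a)) A
      = (1 - a) * ∑' k : ℕ, a ^ k * kIter P (k + 1) x A := by
    rw [bind_resKer_apply P a _ hA]
    refine congrArg _ (tsum_congr fun k => congrArg _ ?_)
    rw [kIter_succ, Kernel.comp_apply]
  have h2 : ((resKer P a x).bind ⇑P) A
      = (1 - a) * ∑' k : ℕ, a ^ k * kIter P (k + 1) x A := by
    rw [Measure.bind_apply hA (Kernel.measurable _).aemeasurable, resKer_apply, kernelResolvent_eq,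
      lintegral_smul_measure, lintegral_sum_measure]
    congr 1
    refine tsum_congr fun k => ?_
    rw [lintegral_smul_measure]
    congr 1
    rw [← Measure.bind_apply hA (Kernel.measurable _).aemeasurable, kIter_succ' P k, Kernel.comp_apply]
  rw [h1, h2]

end Aux
section Feller

variable {M : Type*} [MetricSpace M] [CompactSpace M] [MeasurableSpace M] [BorelSpace M]

/-- A function is "nice" if it is the increasing pointwise supremum of `ENNReal.ofReal`
of continuous functions with values in `[0,1]`. -/
def NiceFun (g : M → ℝ≥0∞) : Prop :=
  ∃ f : ℕ → M → ℝ, (∀ n, Continuous (f n)) ∧ (∀ n x, 0 ≤ f n x) ∧ (∀ n x, f n x ≤ 1) ∧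
    (∀ n x, f n x ≤ f (n + 1) x) ∧ (∀ x, g x = ⨆ n, ENNReal.ofReal (f n x))

lemma niceFun_indicator {V : Set M} (hV : IsOpen V) :
    NiceFun (fun x => Set.indicator V (1 : M → ℝ≥0∞) x) := by
  rcases eq_or_ne V Set.univ with hVu | hVu
  · refine ⟨fun _ _ => 1, fun n => continuous_const, fun n x => zero_le_one,
      fun n x => le_refl 1, fun n x => le_refl 1, fun x => ?_⟩
    simp [hVu, ENNReal.ofReal_one]
  · have hVc : Vᶜ.Nonempty := by
      rw [Set.nonempty_compl]; exact hVu
    refine ⟨fun n x => min 1 (n * Metric.infDist x Vᶜ), fun n =>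
      continuous_const.min (continuous_const.mul (Metric.continuous_infDist_pt _)),
      fun n x => le_min zero_le_one (mul_nonneg (Nat.cast_nonneg n) Metric.infDist_nonneg),
      fun n x => min_le_left _ _, fun n x => ?_, fun x => ?_⟩
    · exact min_le_min (le_refl 1) (mul_le_mul_of_nonneg_right
        (Nat.cast_le.mpr (Nat.le_succ n)) Metric.infDist_nonneg)
    · by_cases hx : x ∈ V
      · have hd : 0 < Metric.infDist x Vᶜ :=
          (IsClosed.notMem_iff_infDist_pos hV.isClosed_compl hVc).mp (by simpa using hx)
        simp only [Set.indicator_of_mem hx, Pi.one_apply]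
        refine le_antisymm ?_ (iSup_le fun n => ENNReal.ofReal_le_one.mpr (min_le_left _ _))
        obtain ⟨n, hn⟩ := exists_nat_gt (1 / Metric.infDist x Vᶜ)
        have h1 : (1 : ℝ) ≤ n * Metric.infDist x Vᶜ := by
          rw [div_lt_iff₀ hd] at hn
          linarith
        have : ENNReal.ofReal (min 1 (n * Metric.infDist x Vᶜ)) = 1 := by
          rw [min_eq_left h1, ENNReal.ofReal_one]
        calc (1 : ℝ≥0∞) = ENNReal.ofReal (min 1 (n * Metric.infDist x Vᶜ)) := this.symm
          _ ≤ ⨆ n : ℕ, ENNReal.ofReal (min 1 (n * Metric.infDist x Vᶜ)) := by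
            exact le_iSup (fun m : ℕ => ENNReal.ofReal (min 1 (m * Metric.infDist x Vᶜ))) n
      · have hd : Metric.infDist x Vᶜ = 0 := Metric.infDist_zero_of_mem (by simpa using hx)
        simp only [Set.indicator_of_notMem hx]
        simp [hd]

variable (P : Kernel M M) [IsMarkovKernel P]

lemma niceFun_step (hPfeller : ∀ f : C(M, ℝ), Continuous fun x => ∫ y, f y ∂(P x))
    {g : M → ℝ≥0∞} (hg : NiceFun g) :
    NiceFun (fun x => ∫⁻ y, g y ∂(P x)) := by
  obtain ⟨f, hc, h0, h1, hmono, hsup⟩ := hg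
  have hint : ∀ n (x : M), Integrable (f n) (P x) := by
    intro n x
    refine (integrable_const (1 : ℝ)).mono' ((hc n).aestronglyMeasurable) ?_
    exact Filter.Eventually.of_forall fun y => by
      rw [Real.norm_eq_abs, abs_of_nonneg (h0 n y)]; exact h1 n y
  refine ⟨fun n x => ∫ y, f n y ∂(P x), fun n => hPfeller ⟨f n, hc n⟩,
    fun n x => integral_nonneg (fun y => h0 n y),
    fun n x => ?_, fun n x => integral_mono (hint n x) (hint (n+1) x) (fun y => hmono n y),
    fun x => ?_⟩
  · calc ∫ y, f n y ∂(P x) ≤ ∫ _, (1 : ℝ) ∂(P x) :=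
        integral_mono (hint n x) (integrable_const 1) (fun y => h1 n y)
      _ = 1 := by simp
  · have : ∀ y, g y = ⨆ n, ENNReal.ofReal (f n y) := hsup
    calc ∫⁻ y, g y ∂(P x) = ∫⁻ y, ⨆ n, ENNReal.ofReal (f n y) ∂(P x) := by
          simp_rw [this]
      _ = ⨆ n, ∫⁻ y, ENNReal.ofReal (f n y) ∂(P x) := by
          refine lintegral_iSup (fun n => (hc n).measurable.ennreal_ofReal) ?_
          intro n m hnm y
          exact ENNReal.ofReal_le_ofReal (monotone_nat_of_le_succ (fun k => hmono k y) hnm)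
      _ = ⨆ n, ENNReal.ofReal (∫ y, f n y ∂(P x)) := by
          refine iSup_congr fun n => ?_
          rw [ofReal_integral_eq_lintegral_ofReal (hint n x)
            (Filter.Eventually.of_forall fun y => h0 n y)]

lemma niceFun_kIter (hPfeller : ∀ f : C(M, ℝ), Continuous fun x => ∫ y, f y ∂(P x))
    {V : Set M} (hV : IsOpen V) (k : ℕ) :
    NiceFun (fun x => kIter P k x V) := by
  induction k with
  | zero =>
    have : (fun x => kIter P 0 x V) = fun x => Set.indicator V (1 : M → ℝ≥0∞) x := by
      funext x
      rw [kIter_zero, Kernel.id_apply, Measure.dirac_apply' x hV.measurableSet]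
    rw [this]
    exact niceFun_indicator hV
  | succ k ih =>
    have : (fun x => kIter P (k+1) x V) = fun x => ∫⁻ y, kIter P k y V ∂(P x) := by
      funext x
      rw [kIter_succ, Kernel.comp_apply, Measure.bind_apply hV.measurableSet (Kernel.measurable _).aemeasurable]
    rw [this]
    exact niceFun_step P hPfeller ih

lemma exists_delta [Nonempty M]
    (hPfeller : ∀ f : C(M, ℝ), Continuous fun x => ∫ y, f y ∂(P x))
    {V : Set M} (hV : IsOpen V) {a : ℝ≥0∞} (ha0 : 0 < a) (ha1 : a < 1)
    (hacc : ∀ x : M, 0 < kernelResolvent P a x V) :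
    ∃ δ : ℝ≥0∞, 0 < δ ∧ δ ≠ ⊤ ∧ ∀ x : M, δ ≤ kernelResolvent P a x V := by
  -- for every point there is a neighbourhood on which the resolvent is uniformly positive
  have key : ∀ x₀ : M, ∃ (U : Set M) (δ : ℝ≥0∞), IsOpen U ∧ x₀ ∈ U ∧ 0 < δ ∧ δ ≠ ⊤ ∧
      ∀ y ∈ U, δ ≤ kernelResolvent P a y V := by
    intro x₀
    have h0 := hacc x₀
    rw [kernelResolvent_apply P a x₀ hV.measurableSet] at h0
    have hsum : ∑' k : ℕ, a ^ k * kIter P k x₀ V ≠ 0 := by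
      intro h
      rw [h, mul_zero] at h0
      exact lt_irrefl 0 h0
    obtain ⟨k, hk⟩ : ∃ k : ℕ, a ^ k * kIter P k x₀ V ≠ 0 := by
      by_contra h
      push_neg at h
      exact hsum (ENNReal.tsum_eq_zero.mpr h)
    have hkV : kIter P k x₀ V ≠ 0 := fun h => hk (by rw [h, mul_zero])
    obtain ⟨f, hc, hf0, hf1, hfm, hfs⟩ := niceFun_kIter P hPfeller hV k
    have hfs' : ∀ y : M, kIter P k y V = ⨆ n, ENNReal.ofReal (f n y) := hfs
    have : (0 : ℝ≥0∞) < ⨆ n, ENNReal.ofReal (f n x₀) := by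
      rw [← hfs' x₀]; exact pos_iff_ne_zero.mpr hkV
    obtain ⟨n, hn⟩ : ∃ n, (0:ℝ≥0∞) < ENNReal.ofReal (f n x₀) := by
      rcases lt_iSup_iff.mp this with ⟨n, hn⟩; exact ⟨n, hn⟩
    have hfn0 : 0 < f n x₀ := ENNReal.ofReal_pos.mp hn
    set U : Set M := {y | f n x₀ / 2 < f n y} with hU
    have hUopen : IsOpen U := isOpen_lt continuous_const (hc n)
    have hx₀U : x₀ ∈ U := by simp only [hU, Set.mem_setOf_eq]; linarith
    set t : ℝ≥0∞ := ENNReal.ofReal (f n x₀ / 2) with ht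
    have ht0 : 0 < t := ENNReal.ofReal_pos.mpr (by linarith)
    refine ⟨U, (1 - a) * (a ^ k * t), hUopen, hx₀U, ?_, ?_, ?_⟩
    · exact ENNReal.mul_pos (one_sub_ne_zero ha1)
        (ENNReal.mul_pos (pow_ne_zero k ha0.ne') ht0.ne').ne'
    · exact ENNReal.mul_ne_top one_sub_ne_top
        (ENNReal.mul_ne_top (ENNReal.pow_ne_top (ha1.trans ENNReal.one_lt_top).ne)
          ENNReal.ofReal_ne_top)
    · intro y hy
      have h1 : t ≤ kIter P k y V := by
        rw [hfs' y]
        calc t ≤ ENNReal.ofReal (f n y) := ENNReal.ofReal_le_ofReal (le_of_lt hy)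
          _ ≤ ⨆ m, ENNReal.ofReal (f m y) := le_iSup (fun m => ENNReal.ofReal (f m y)) n
      rw [kernelResolvent_apply P a y hV.measurableSet]
      refine mul_le_mul_right ?_ (1 - a)
      calc a ^ k * t ≤ a ^ k * kIter P k y V := mul_le_mul_right h1 _
        _ ≤ ∑' j : ℕ, a ^ j * kIter P j y V := ENNReal.le_tsum k
  choose U δf hUopen hmem hδ0 hδtop hbound using key
  obtain ⟨F, hF⟩ := IsCompact.elim_finite_subcover isCompact_univ U hUopen
    (fun x _ => Set.mem_iUnion.mpr ⟨x, hmem x⟩)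
  have hFne : F.Nonempty := by
    by_contra h
    rw [Finset.not_nonempty_iff_eq_empty] at h
    obtain ⟨x⟩ := ‹Nonempty M›
    have := hF (Set.mem_univ x)
    simp [h] at this
  refine ⟨F.inf' hFne δf, ?_, ?_, ?_⟩
  · rw [Finset.lt_inf'_iff]
    exact fun i _ => hδ0 i
  · obtain ⟨i, hi⟩ := hFne
    exact fun h => hδtop i (eq_top_iff.mpr (h ▸ Finset.inf'_le δf hi))
  · intro x
    obtain ⟨i, hiF, hxi⟩ : ∃ i ∈ F, x ∈ U i := by
      have := hF (Set.mem_univ x)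
      simpa using this
    exact le_trans (Finset.inf'_le δf hiF) (hbound i x hxi)

end Feller
section MainAux

variable {M : Type*} [MeasurableSpace M]

lemma bind_markov_univ (m : Measure M) (κ : Kernel M M) [IsMarkovKernel κ] :
    (m.bind ⇑κ) Set.univ = m Set.univ := by
  rw [Measure.bind_apply MeasurableSet.univ (Kernel.measurable _).aemeasurable]
  simp

lemma hbind_comp (m : Measure M) (κ η : Kernel M M) :
    (m.bind ⇑κ).bind ⇑η = m.bind ⇑(η ∘ₖ κ) := by
  rw [Measure.bind_bind (Kernel.measurable _).aemeasurable (Kernel.measurable _).aemeasurable]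
  congr 1

end MainAux

theorem stmt5 {M : Type*} [MetricSpace M] [CompactSpace M]
    [MeasurableSpace M] [BorelSpace M]
    (P : Kernel M M) [IsMarkovKernel P]
    (hPfeller : ∀ f : C(M, ℝ), Continuous fun x => ∫ y, f y ∂(P x))
    (C : Set (Measure M))
    (hcone : ∀ μ ∈ C, ∀ ν ∈ C, ∀ b c : ℝ≥0∞, b • μ + c • ν ∈ C)
    (hmono : ∀ (μseq : ℕ → Measure M), (∀ n, μseq n ∈ C) → Monotone μseq →
      ∀ ν : Measure M, IsFiniteMeasure ν →
        (∀ A : Set M, MeasurableSet A →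
          Tendsto (fun n => μseq n A) atTop (nhds (ν A))) → ν ∈ C)
    (hPC : ∀ μ ∈ C, μ.bind (⇑P) ∈ C)
    (V : Set M) (hV : IsOpen V)
    (π₀ : Measure M) [IsFiniteMeasure π₀] (hπ₀ : π₀ ∈ C) (hπ₀ne : π₀ ≠ 0)
    (a : ℝ≥0∞) (ha0 : 0 < a) (ha1 : a < 1)
    (hminor : ∀ x ∈ V, π₀ ≤ kernelResolvent P a x)
    (hacc : ∀ x : M, 0 < kernelResolvent P a x V)
    (hsub : ∀ μ ∈ C, π₀ ≤ μ → μ - π₀ ∈ C) :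
    ∃ π : Measure M, (IsProbabilityMeasure π ∧ π.bind (⇑P) = π ∧ π ∈ C) ∧
      ∀ π' : Measure M, IsProbabilityMeasure π' → π'.bind (⇑P) = π' → π' = π := by
  haveI hne : Nonempty M := by
    by_contra h
    rw [not_nonempty_iff] at h
    refine hπ₀ne ?_
    ext s hs
    rw [Set.eq_empty_of_isEmpty s]
    simp
  set R : Kernel M M := resKer P a with hR
  haveI hRM : IsMarkovKernel R := resKer_markov P ha1
  obtain ⟨δ, hδ0, hδtop, hδ⟩ := exists_delta P hPfeller hV ha0 ha1 hacc
  have hRapp : ∀ x : M, R x = kernelResolvent P a x := fun x => rfl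
  have hδ1 : δ ≤ 1 := by
    obtain ⟨x⟩ := hne
    calc δ ≤ kernelResolvent P a x V := hδ x
      _ ≤ kernelResolvent P a x Set.univ := measure_mono (Set.subset_univ V)
      _ = 1 := by rw [← hRapp x]; exact measure_univ
  have hVne : V.Nonempty := by
    by_contra h
    rw [Set.not_nonempty_iff_eq_empty] at h
    obtain ⟨x⟩ := hne
    have h2 := hacc x
    rw [h] at h2
    simp at h2
  obtain ⟨v, hv⟩ := hVne
  have hπ₀univ_le : π₀ Set.univ ≤ 1 := by
    calc π₀ Set.univ ≤ kernelResolvent P a v Set.univ :=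
        Measure.le_iff.mp (hminor v hv) _ MeasurableSet.univ
      _ = 1 := by rw [← hRapp v]; exact measure_univ
  have hπ₀pos : 0 < π₀ Set.univ := by
    rw [pos_iff_ne_zero]
    exact fun h => hπ₀ne (Measure.measure_univ_eq_zero.mp h)
  set β : ℝ≥0∞ := δ * π₀ Set.univ with hβ
  have hβ0 : β ≠ 0 := (ENNReal.mul_pos hδ0.ne' hπ₀pos.ne').ne'
  have hβ1 : β ≤ 1 := by
    calc δ * π₀ Set.univ ≤ 1 * 1 := mul_le_mul' hδ1 hπ₀univ_le
      _ = 1 := one_mul 1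
  have hβtop : β ≠ ⊤ := (hβ1.trans_lt ENNReal.one_lt_top).ne
  set S : Kernel M M := R ∘ₖ R with hS
  haveI hSM : IsMarkovKernel S := Kernel.IsMarkovKernel.comp _ _
  haveI hπ₀δfin : IsFiniteMeasure (δ • π₀) := ⟨by
    rw [Measure.smul_apply, smul_eq_mul]
    exact hβ ▸ (hβ1.trans_lt ENNReal.one_lt_top)⟩
  -- minorization of the square of the resolvent
  have hminor' : ∀ (x : M) (A : Set M), MeasurableSet A → δ * π₀ A ≤ S x A := by
    intro x A hA
    have h1 : S x A = ∫⁻ y, R y A ∂(R x) := by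
      rw [hS, Kernel.comp_apply, Measure.bind_apply hA (Kernel.measurable _).aemeasurable]
    rw [h1]
    calc δ * π₀ A = π₀ A * δ := mul_comm _ _
      _ ≤ π₀ A * R x V := mul_le_mul_right (hδ x) _
      _ = ∫⁻ _ in V, π₀ A ∂(R x) := (setLIntegral_const V (π₀ A)).symm
      _ = ∫⁻ y, V.indicator (fun _ => π₀ A) y ∂(R x) :=
          (lintegral_indicator hV.measurableSet _).symm
      _ ≤ ∫⁻ y, R y A ∂(R x) := by
          refine lintegral_mono fun y => ?_
          by_cases hy : y ∈ V
          · rw [Set.indicator_of_mem hy]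
            exact Measure.le_iff.mp (hminor y hy) A hA
          · rw [Set.indicator_of_notMem hy]
            exact zero_le
  have hminorM : ∀ x : M, δ • π₀ ≤ S x := fun x => Measure.le_iff.mpr (fun A hA => by
    rw [Measure.smul_apply, smul_eq_mul]
    exact hminor' x A hA)
  -- the defect kernel Q
  have hQmeas : Measurable (fun x : M => S x - δ • π₀) := by
    refine Measure.measurable_of_measurable_coe _ (fun A hA => ?_)
    have h1 : (fun x : M => (S x - δ • π₀) A) = fun x => S x A - δ * π₀ A := by
      funext x
      rw [Measure.sub_apply hA (hminorM x), Measure.smul_apply, smul_eq_mul]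
    rw [h1]
    exact (Kernel.measurable_coe S hA).sub measurable_const
  set Q : Kernel M M := ⟨fun x => S x - δ • π₀, hQmeas⟩ with hQdef
  have hQ_apply : ∀ (x : M) (A : Set M), MeasurableSet A → Q x A = S x A - δ * π₀ A := by
    intro x A hA
    show (S x - δ • π₀) A = _
    rw [Measure.sub_apply hA (hminorM x), Measure.smul_apply, smul_eq_mul]
  have hQ_univ : ∀ x : M, Q x Set.univ = 1 - β := fun x => by
    rw [hQ_apply x _ MeasurableSet.univ, measure_univ, hβ]
  have hSQ : ∀ (x : M) (A : Set M), MeasurableSet A → S x A = δ * π₀ A + Q x A := by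
    intro x A hA
    rw [hQ_apply x A hA, add_comm]
    exact (tsub_add_cancel_of_le (hminor' x A hA)).symm
  -- bind computations
  have hbindQuniv : ∀ m : Measure M, (m.bind ⇑Q) Set.univ = (1 - β) * m Set.univ := by
    intro m
    rw [Measure.bind_apply MeasurableSet.univ (Kernel.measurable _).aemeasurable]
    simp_rw [hQ_univ]
    rw [lintegral_const]
  have hbindS_ge : ∀ (m : Measure M) (A : Set M), MeasurableSet A →
      δ * π₀ A * m Set.univ ≤ (m.bind ⇑S) A := by
    intro m A hA
    rw [Measure.bind_apply hA (Kernel.measurable _).aemeasurable]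
    calc δ * π₀ A * m Set.univ = ∫⁻ _, δ * π₀ A ∂m := (lintegral_const _).symm
      _ ≤ ∫⁻ x, S x A ∂m := lintegral_mono fun x => hminor' x A hA
  have hbindQ_apply : ∀ (m : Measure M), m Set.univ ≠ ⊤ → ∀ (A : Set M), MeasurableSet A →
      (m.bind ⇑Q) A = (m.bind ⇑S) A - δ * π₀ A * m Set.univ := by
    intro m hm A hA
    rw [Measure.bind_apply hA (Kernel.measurable _).aemeasurable, Measure.bind_apply hA (Kernel.measurable _).aemeasurable]
    have h1 : ∀ x : M, Q x A = S x A - δ * π₀ A := fun x => hQ_apply x A hA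
    simp_rw [h1]
    rw [lintegral_sub measurable_const
      (by
        rw [lintegral_const]
        exact ENNReal.mul_ne_top
          (ENNReal.mul_ne_top hδtop (measure_ne_top π₀ A)) hm)
      (Filter.Eventually.of_forall fun x => hminor' x A hA), lintegral_const]
  -- the series of measures
  set T : Measure M → Measure M := fun m => m.bind ⇑Q with hT
  set σ : ℕ → Measure M := fun k => T^[k] (δ • π₀) with hσ
  have hσ0 : σ 0 = δ • π₀ := rfl
  have hσsucc : ∀ k, σ (k + 1) = (σ k).bind ⇑Q := fun k => by
    rw [hσ]
    simp only [Function.iterate_succ_apply']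
    rfl
  have hσuniv : ∀ k, σ k Set.univ = β * (1 - β) ^ k := by
    intro k
    induction k with
    | zero => rw [hσ0, Measure.smul_apply, smul_eq_mul, pow_zero, mul_one, hβ]
    | succ k ih =>
      rw [hσsucc, hbindQuniv, ih, pow_succ]
      ring
  have hσfin : ∀ k, σ k Set.univ ≠ ⊤ := fun k => by
    rw [hσuniv]
    exact ENNReal.mul_ne_top hβtop (ENNReal.pow_ne_top
      (ne_top_of_le_ne_top ENNReal.one_ne_top tsub_le_self))
  -- uniqueness among S-invariant probability measures
  have h1β : (1 : ℝ≥0∞) - β < 1 := ENNReal.sub_lt_self ENNReal.one_ne_top one_ne_zero hβ0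
  have hTadd : ∀ m m' : Measure M, T (m + m') = T m + T m' := by
    intro m m'
    ext A hA
    rw [hT]
    simp only
    rw [Measure.bind_apply hA (Kernel.measurable _).aemeasurable, lintegral_add_measure, Measure.add_apply,
      Measure.bind_apply hA (Kernel.measurable _).aemeasurable, Measure.bind_apply hA (Kernel.measurable _).aemeasurable]
  have hTiterAdd : ∀ (n : ℕ) (m m' : Measure M), T^[n] (m + m') = T^[n] m + T^[n] m' := by
    intro n
    induction n with
    | zero => intro m m'; simp
    | succ n ih =>
      intro m m'
      rw [Function.iterate_succ_apply, Function.iterate_succ_apply,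
        Function.iterate_succ_apply, hTadd, ih]
  have hTiterUniv : ∀ (n : ℕ) (m : Measure M),
      (T^[n] m) Set.univ = (1 - β) ^ n * m Set.univ := by
    intro n
    induction n with
    | zero => intro m; simp
    | succ n ih =>
      intro m
      rw [Function.iterate_succ_apply', hT]
      simp only
      rw [hbindQuniv, ih, pow_succ]
      ring
  have huniq : ∀ μ : Measure M, IsProbabilityMeasure μ → μ.bind ⇑S = μ → μ = Measure.sum σ := by
    intro μ hμp hμS
    have hμuniv : μ Set.univ = 1 := hμp.measure_univ
    have hμfin : μ Set.univ ≠ ⊤ := by rw [hμuniv]; exact ENNReal.one_ne_top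
    have hlow : ∀ (A : Set M), MeasurableSet A → δ * π₀ A ≤ μ A := by
      intro A hA
      have := hbindS_ge μ A hA
      rw [hμS, hμuniv, mul_one] at this
      exact this
    have hdecomp : μ = δ • π₀ + μ.bind ⇑Q := by
      ext A hA
      rw [Measure.add_apply, Measure.smul_apply, smul_eq_mul,
        hbindQ_apply μ hμfin A hA, hμS, hμuniv, mul_one, add_comm]
      exact (tsub_add_cancel_of_le (hlow A hA)).symm
    have hdecomp_n : ∀ n : ℕ, μ = (∑ k ∈ Finset.range n, σ k) + T^[n] μ := by
      intro n
      induction n with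
      | zero => simp
      | succ n ih =>
        have h2 : T^[n] μ = σ n + T^[n + 1] μ := by
          conv_lhs => rw [hdecomp]
          rw [hTiterAdd]
          congr 1
        rw [Finset.sum_range_succ]
        calc μ = (∑ k ∈ Finset.range n, σ k) + T^[n] μ := ih
          _ = (∑ k ∈ Finset.range n, σ k) + (σ n + T^[n + 1] μ) := by rw [h2]
          _ = ((∑ k ∈ Finset.range n, σ k) + σ n) + T^[n + 1] μ := (add_assoc _ _ _).symm
    ext A hA
    have hn : ∀ n : ℕ, μ A = (∑ k ∈ Finset.range n, σ k A) + (T^[n] μ) A := by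
      intro n
      conv_lhs => rw [hdecomp_n n]
      rw [Measure.add_apply, Measure.finset_sum_apply]
    have hrem : Tendsto (fun n => (T^[n] μ) A) atTop (𝓝 0) := by
      refine tendsto_of_tendsto_of_tendsto_of_le_of_le tendsto_const_nhds
        (ENNReal.tendsto_pow_atTop_nhds_zero_of_lt_one h1β)
        (fun n => zero_le) (fun n => ?_)
      calc (T^[n] μ) A ≤ (T^[n] μ) Set.univ := measure_mono (Set.subset_univ A)
        _ = (1 - β) ^ n := by rw [hTiterUniv, hμuniv, mul_one]
    have htend : Tendsto (fun n => (∑ k ∈ Finset.range n, σ k A) + (T^[n] μ) A) atTop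
        (𝓝 (∑' k, σ k A + 0)) :=
      Tendsto.add (ENNReal.tendsto_nat_tsum fun k => σ k A) hrem
    have hconst : Tendsto (fun _ : ℕ => μ A) atTop (𝓝 (μ A)) := tendsto_const_nhds
    have heq : (fun n : ℕ => μ A) = fun n => (∑ k ∈ Finset.range n, σ k A) + (T^[n] μ) A :=
      funext fun n => hn n
    rw [heq] at hconst
    have := tendsto_nhds_unique hconst htend
    rw [Measure.sum_apply _ hA, this, add_zero]
  -- the candidate invariant measure
  set Pim : Measure M := Measure.sum σ with hPim
  haveI hPimprob : IsProbabilityMeasure Pim := by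
    constructor
    rw [hPim, Measure.sum_apply _ MeasurableSet.univ]
    simp_rw [hσuniv]
    rw [ENNReal.tsum_mul_left, ENNReal.tsum_geometric, ENNReal.sub_sub_cancel ENNReal.one_ne_top hβ1,
      ENNReal.mul_inv_cancel hβ0 hβtop]
  -- Pim is S-invariant
  have hPimS : Pim.bind ⇑S = Pim := by
    ext A hA
    have hterm : ∀ k, ((σ k).bind ⇑S) A = δ * π₀ A * (β * (1 - β) ^ k) + σ (k + 1) A := by
      intro k
      rw [Measure.bind_apply hA (Kernel.measurable _).aemeasurable]
      have h1 : ∀ x : M, S x A = δ * π₀ A + Q x A := fun x => hSQ x A hA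
      simp_rw [h1]
      rw [lintegral_add_left measurable_const, lintegral_const, hσuniv,
        ← Measure.bind_apply hA (Kernel.measurable _).aemeasurable, ← hσsucc]
    have h2 : (Pim.bind ⇑S) A = ∑' k, ((σ k).bind ⇑S) A := by
      rw [Measure.bind_apply hA (Kernel.measurable _).aemeasurable, hPim, lintegral_sum_measure]
      exact tsum_congr fun k => (Measure.bind_apply hA (Kernel.measurable _).aemeasurable).symm
    rw [h2]
    simp_rw [hterm]
    rw [ENNReal.tsum_add, ENNReal.tsum_mul_left (a := δ * π₀ A), ENNReal.tsum_mul_left (a := β),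
      ENNReal.tsum_geometric, ENNReal.sub_sub_cancel ENNReal.one_ne_top hβ1, ENNReal.mul_inv_cancel hβ0 hβtop,
      mul_one]
    have h3 : ∑' k, σ k A = σ 0 A + ∑' k, σ (k + 1) A :=
      tsum_eq_zero_add' ENNReal.summable
    rw [Measure.sum_apply _ hA, h3, hσ0, Measure.smul_apply, smul_eq_mul]
  -- commutation of S and P
  have hPS : S ∘ₖ P = P ∘ₖ S := by
    rw [hS, Kernel.comp_assoc, hR, resKer_comp_comm, ← Kernel.comp_assoc, resKer_comp_comm,
      Kernel.comp_assoc]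
  -- Pim is P-invariant
  have hPimP : Pim.bind ⇑P = Pim := by
    have hPprob : IsProbabilityMeasure (Pim.bind ⇑P) := by
      constructor
      rw [bind_markov_univ, hPimprob.measure_univ]
    have hPinv : (Pim.bind ⇑P).bind ⇑S = Pim.bind ⇑P := by
      rw [hbind_comp, hPS, ← hbind_comp, hPimS]
    exact huniq _ hPprob hPinv
  -- membership in the cone
  have hC0 : (0 : Measure M) ∈ C := by
    have := hcone π₀ hπ₀ π₀ hπ₀ 0 0
    simpa using this
  have hCsmul : ∀ (b : ℝ≥0∞) (μ : Measure M), μ ∈ C → b • μ ∈ C := by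
    intro b μ h
    have := hcone μ h μ h b 0
    simpa using this
  have hCadd : ∀ μ ∈ C, ∀ ν ∈ C, μ + ν ∈ C := by
    intro μ hμ ν hν
    have := hcone μ hμ ν hν 1 1
    simpa using this
  have hCkIter : ∀ m ∈ C, ∀ k : ℕ, m.bind ⇑(kIter P k) ∈ C := by
    intro m hm k
    induction k with
    | zero =>
      have h1 : m.bind ⇑(kIter P 0) = m := by
        rw [kIter_zero, coe_kernel_id, Measure.bind_dirac]
      rw [h1]; exact hm
    | succ k ih =>
      rw [bind_kIter_succ]
      exact hPC _ ih
  have hCR : ∀ m ∈ C, m Set.univ ≠ ⊤ → m.bind ⇑R ∈ C := by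
    intro m hm hmfin
    refine hmono (fun n => ∑ k ∈ Finset.range n, ((1 - a) * a ^ k) • (m.bind ⇑(kIter P k)))
      ?_ ?_ _ ⟨by rw [hR, bind_markov_univ]; exact lt_top_iff_ne_top.mpr hmfin⟩ ?_
    · intro n
      induction n with
      | zero => simpa using hC0
      | succ n ih =>
        simp only [Finset.sum_range_succ]
        exact hCadd _ ih _ (hCsmul _ _ (hCkIter m hm n))
    · refine monotone_nat_of_le_succ fun n => ?_
      simp only [Finset.sum_range_succ]
      exact Measure.le_add_right le_rfl
    · intro A hA
      have h2 : (m.bind ⇑R) A = ∑' k, ((1 - a) * a ^ k) * (m.bind ⇑(kIter P k)) A := by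
        rw [hR, bind_resKer_apply P a m hA, ← ENNReal.tsum_mul_left]
        exact tsum_congr fun k => by ring
      have h3 : ∀ n, (∑ k ∈ Finset.range n, ((1 - a) * a ^ k) • (m.bind ⇑(kIter P k))) A
          = ∑ k ∈ Finset.range n, ((1 - a) * a ^ k) * (m.bind ⇑(kIter P k)) A := by
        intro n
        rw [Measure.finset_sum_apply]
        exact Finset.sum_congr rfl fun k _ => by rw [Measure.smul_apply, smul_eq_mul]
      rw [h2]
      simp only [h3]
      exact ENNReal.tendsto_nat_tsum _
  have hCS : ∀ m ∈ C, m Set.univ ≠ ⊤ → m.bind ⇑S ∈ C := by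
    intro m hm hmfin
    have h1 : m.bind ⇑S = (m.bind ⇑R).bind ⇑R := by
      rw [hbind_comp, hS]
    rw [h1]
    refine hCR _ (hCR m hm hmfin) ?_
    rw [hR, bind_markov_univ]
    exact hmfin
  have hCQ : ∀ m ∈ C, m Set.univ ≠ ⊤ → m.bind ⇑Q ∈ C := by
    intro m hm hmfin
    by_cases hm0 : m = 0
    · rw [hm0, Measure.bind_zero_left]
      exact hC0
    · set c : ℝ≥0∞ := δ * m Set.univ with hc
      have hc0 : c ≠ 0 := by
        rw [hc]
        exact ENNReal.mul_pos hδ0.ne'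
          (fun h => hm0 (Measure.measure_univ_eq_zero.mp h)) |>.ne'
      have hctop : c ≠ ⊤ := ENNReal.mul_ne_top hδtop hmfin
      have hle : ∀ (A : Set M), MeasurableSet A → c * π₀ A ≤ (m.bind ⇑S) A := by
        intro A hA
        calc c * π₀ A = δ * π₀ A * m Set.univ := by rw [hc]; ring
          _ ≤ (m.bind ⇑S) A := hbindS_ge m A hA
      have hμ'C : c⁻¹ • (m.bind ⇑S) ∈ C := hCsmul _ _ (hCS m hm hmfin)
      have hle' : π₀ ≤ c⁻¹ • (m.bind ⇑S) := by
        refine Measure.le_iff.mpr fun A hA => ?_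
        rw [Measure.smul_apply, smul_eq_mul]
        calc π₀ A = c⁻¹ * (c * π₀ A) := by
              rw [← mul_assoc, ENNReal.inv_mul_cancel hc0 hctop, one_mul]
          _ ≤ c⁻¹ * (m.bind ⇑S) A := mul_le_mul_right (hle A hA) _
      have hDC : c • (c⁻¹ • (m.bind ⇑S) - π₀) ∈ C :=
        hCsmul _ _ (hsub _ hμ'C hle')
      have heq : m.bind ⇑Q = c • (c⁻¹ • (m.bind ⇑S) - π₀) := by
        ext A hA
        rw [hbindQ_apply m hmfin A hA, Measure.smul_apply, smul_eq_mul,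
          Measure.sub_apply hA hle', Measure.smul_apply, smul_eq_mul,
          ENNReal.mul_sub (fun _ _ => hctop), ← mul_assoc,
          ENNReal.mul_inv_cancel hc0 hctop, one_mul]
        congr 1
        rw [hc]
        ring
      rw [heq]
      exact hDC
  have hCσ : ∀ k : ℕ, σ k ∈ C := by
    intro k
    induction k with
    | zero => rw [hσ0]; exact hCsmul _ _ hπ₀
    | succ k ih =>
      rw [hσsucc]
      exact hCQ _ ih (hσfin k)
  have hPimC : Pim ∈ C := by
    refine hmono (fun n => ∑ k ∈ Finset.range n, σ k) ?_ ?_ Pim inferInstance ?_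
    · intro n
      induction n with
      | zero => simpa using hC0
      | succ n ih =>
        simp only [Finset.sum_range_succ]
        exact hCadd _ ih _ (hCσ n)
    · refine monotone_nat_of_le_succ fun n => ?_
      simp only [Finset.sum_range_succ]
      exact Measure.le_add_right le_rfl
    · intro A hA
      have h1 : ∀ n, (∑ k ∈ Finset.range n, σ k) A = ∑ k ∈ Finset.range n, σ k A :=
        fun n => Measure.finset_sum_apply _ _ _
      simp only [h1]
      rw [hPim, Measure.sum_apply _ hA]
      exact ENNReal.tendsto_nat_tsum _
  refine ⟨Pim, ⟨hPimprob, hPimP, hPimC⟩, ?_⟩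
  intro π' hπ' hπ'inv
  have hπ'R : π'.bind ⇑R = π' := bind_resKer_invariant P ha1 hπ'inv
  have hπ'S : π'.bind ⇑S = π' := by
    rw [hS, ← hbind_comp, hπ'R, hπ'R]
  exact huniq π' hπ' hπ'S
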